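/- If i* ∈ {0,…,N} is a maximizer of W̃ over {0,…,N}, then F(i*) ≥ r(i*). -/
import Mathlib


open Finset

noncomputable section

/-- `W̃(n) = n·F(n) − Σ_{i=1}^n r(i)`: welfare when θ = 1 and the first `n` agents move. -/
def Wtil (F r : ℕ → ℝ) (n : ℕ) : ℝ :=
  (n : ℝ) * F n - ∑ i ∈ Icc 1 n, r i

/-- at any maximizer `i*` of `W̃` over `{0,…,N}`, `F(i*) ≥ r(i*)`. -/
theorem stmt7 (N : ℕ) (hN : 1 ≤ N) (F r : ℕ → ℝ)
    (hFnn : ∀ n, n ≤ N → 0 ≤ F n) (hF01 : F 0 = F 1)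
    (hFmono : ∀ n, n + 1 ≤ N → F (n + 1) ≤ F n)
    (hr0 : r 0 = 0) (hrnn : ∀ i, i ≤ N → 0 ≤ r i)
    (hrmono : ∀ i, i + 1 ≤ N → r i ≤ r (i + 1))
    (istar : ℕ) (histar : istar ≤ N)
    (hmax : ∀ n ≤ N, Wtil F r n ≤ Wtil F r istar) :
    r istar ≤ F istar := by
  cases istar with
  | zero => simpa [hr0] using hFnn 0 (Nat.zero_le N)
  | succ m =>
    have hm : m ≤ N := Nat.le_of_succ_le histar
    have h1 := hmax m hm
    have hFm : F (m + 1) ≤ F m := hFmono m histar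
    have hsum : ∑ i ∈ Icc 1 (m + 1), r i = (∑ i ∈ Icc 1 m, r i) + r (m + 1) := by
      rw [← Finset.sum_Icc_succ_top (Nat.le_add_left 1 m)]
    have key : (m : ℝ) * F (m + 1) ≤ (m : ℝ) * F m :=
      mul_le_mul_of_nonneg_left hFm (Nat.cast_nonneg m)
    simp only [Wtil, hsum] at h1 ⊢
    push_cast at h1 ⊢
    nlinarith [key]

end
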